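/- A small category C admits a structure of inverse category (i.e., is obtained by transfinitely iterating the gluing/collage construction starting from the empty category) if and only if one can assign an ordinal degree to each of its objects such that every nonidentity morphism strictly decreases degree. -/

import Mathlib

open CategoryTheory Category

universe u

/-- A small category admits the structure of an inverse category — i.e. it can be
built by transfinitely iterating the gluing (collage-along-a-profunctor-to-a-
discrete-set) construction, starting from the empty category — if and only if one
can assign an ordinal degree to each object so that every nonidentity morphism
strictly decreases degree.

The left-hand side is phrased via the induced filtration `A δ` of objects built
by stage `δ`: it starts empty, grows continuously, exhausts `C` by stage `β`, and
at each successor stage the newly added objects form a discrete stratum (the only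
morphisms between them are identities) receiving no morphisms from the objects
already constructed — which is precisely what the collage of a profunctor
`W : C ⇸ I` to a discrete set `I` looks like. -/
theorem inverse_category_iff_degree_function
    (C : Type u) [SmallCategory C] :
    (∃ (β : Ordinal.{u}) (A : Ordinal.{u} → Set C),
        A 0 = ∅ ∧
        Monotone A ∧
        (∀ δ : Ordinal.{u}, Order.IsSuccLimit δ → A δ = ⋃ δ' < δ, A δ') ∧
        A β = Set.univ ∧
        (∀ δ : Ordinal.{u}, ∀ x y : C, x ∈ A (δ + 1) \ A δ → y ∈ A (δ + 1) \ A δ →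
          ∀ f : x ⟶ y, x = y ∧ HEq f (𝟙 x)) ∧
        (∀ δ : Ordinal.{u}, ∀ c x : C, c ∈ A δ → x ∈ A (δ + 1) \ A δ →
          IsEmpty (c ⟶ x))) ↔
      (∃ deg : C → Ordinal.{u},
        (∀ x y : C, (x ⟶ y) → x ≠ y → deg y < deg x) ∧
        (∀ x : C, ∀ f : x ⟶ x, f = 𝟙 x)) := by
  constructor
  · rintro ⟨β, A, h0, hmono, hlim, huniv, hdisc, hnone⟩
    set deg : C → Ordinal.{u} := fun x => sInf {δ | x ∈ A (δ + 1)} with hdeg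
    have hne : ∀ x : C, {δ | x ∈ A (δ + 1)}.Nonempty := by
      intro x
      exact ⟨β, hmono (le_of_lt (Order.lt_add_one_iff.mpr le_rfl)) (huniv ▸ Set.mem_univ x : x ∈ A β)⟩
    have hmem : ∀ x : C, x ∈ A (deg x + 1) := fun x => csInf_mem (hne x)
    have hnmem : ∀ x : C, x ∉ A (deg x) := by
      intro x hx
      rcases Ordinal.zero_or_succ_or_isSuccLimit (deg x) with h | ⟨γ, h⟩ | h
      · rw [h, h0] at hx; exact hx
      · have : γ ∈ {δ | x ∈ A (δ + 1)} := by
          rw [← h] at hx; exact hx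
        have hle := csInf_le' this
        have : deg x ≤ γ := hle
        rw [← h] at this
        exact absurd this (by simp)
      · rw [hlim _ h] at hx
        simp only [Set.mem_iUnion] at hx
        obtain ⟨δ', hδ', hxδ'⟩ := hx
        have : δ' ∈ {δ | x ∈ A (δ + 1)} :=
          hmono (le_of_lt (Order.lt_succ δ')) hxδ'
        exact absurd (csInf_le' this) (not_le.mpr hδ')
    have hstrat : ∀ x : C, x ∈ A (deg x + 1) \ A (deg x) := fun x => ⟨hmem x, hnmem x⟩
    refine ⟨deg, ?_, ?_⟩
    · intro x y f hxy
      by_contra h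
      rcases lt_or_eq_of_le (not_lt.mp h) with hlt | heq
      · have hx : x ∈ A (deg y) := hmono (Order.succ_le_of_lt hlt) (hmem x)
        exact (hnone (deg y) x y hx (hstrat y)).false f
      · have := hdisc (deg x) x y (hstrat x) (heq ▸ hstrat y) f
        exact hxy this.1
    · intro x f
      have := hdisc (deg x) x x (hstrat x) (hstrat x) f
      exact eq_of_heq this.2
  · rintro ⟨deg, hlt, hid⟩
    refine ⟨Ordinal.lsub.{u, u} deg, fun δ => {x | deg x < δ}, ?_, ?_, ?_, ?_, ?_, ?_⟩
    · ext x; simp [not_lt_zero]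
    · intro a b hab x hx; exact lt_of_lt_of_le hx hab
    · intro δ hδ
      ext x
      simp only [Set.mem_iUnion, Set.mem_setOf_eq]
      constructor
      · intro h; exact ⟨deg x + 1, hδ.succ_lt h, Order.lt_succ _⟩
      · rintro ⟨δ', hδ', h⟩; exact lt_trans h hδ'
    · ext x; simp [Ordinal.lt_lsub]
    · intro δ x y hx hy f
      have hdx : deg x = δ := le_antisymm (Order.lt_succ_iff.mp hx.1) (not_lt.mp hx.2)
      have hdy : deg y = δ := le_antisymm (Order.lt_succ_iff.mp hy.1) (not_lt.mp hy.2)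
      have hxy : x = y := by
        by_contra h
        have := hlt x y f h
        rw [hdx, hdy] at this
        exact absurd this (lt_irrefl δ)
      subst hxy
      exact ⟨rfl, heq_of_eq (hid x f)⟩
    · intro δ c x hc hx
      refine ⟨fun f => ?_⟩
      have hdx : deg x = δ := le_antisymm (Order.lt_succ_iff.mp hx.1) (not_lt.mp hx.2)
      by_cases h : c = x
      · subst h
        have : deg c < δ := hc
        rw [hdx] at this
        exact absurd this (lt_irrefl _)
      · have h1 : deg c < δ := hc
        rw [← hdx] at h1
        exact absurd (lt_trans (hlt c x f h) h1) (lt_irrefl _)
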